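/- Let (α,β) ∈ ℂ² with (α,β) ≠ (0,0), and set F = α·P₁ + β·P₂ where P₁ = z₀²z₁²z₂² and P₂ = z₀⁵z₁ + z₂⁵z₀ + z₁⁵z₂. There exists a nonzero point of ℂ³ at which all three partial derivatives ∂F/∂z₀, ∂F/∂z₁, ∂F/∂z₂ vanish if and only if β = 0 or α³ = −27·β³. In particular, up to nonzero scalar multiples, the pencil spanned by P₁ and P₂ contains exactly four polynomials defining singular plane projective curves: P₁ and the three polynomials 3P₁ − ζᵏP₂ where ζ is a primitive cube root of unity and k = 0, 1, 2. -/

import Mathlib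

open MvPolynomial

noncomputable def P₁ : MvPolynomial (Fin 3) ℂ := X 0 ^ 2 * X 1 ^ 2 * X 2 ^ 2

noncomputable def P₂ : MvPolynomial (Fin 3) ℂ :=
  X 0 ^ 5 * X 1 + X 2 ^ 5 * X 0 + X 1 ^ 5 * X 2

/-- `F` defines a singular plane projective curve iff its partial derivatives have a
common zero in `ℂ³ ∖ {0}`. -/
def IsSingularCurve (F : MvPolynomial (Fin 3) ℂ) : Prop :=
  ∃ v : Fin 3 → ℂ, v ≠ 0 ∧ ∀ i : Fin 3, eval v (pderiv i F) = 0

lemma pd0 (α β : ℂ) (v : Fin 3 → ℂ) :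
    eval v (pderiv 0 (C α * P₁ + C β * P₂)) =
      2*α*(v 0)*(v 1)^2*(v 2)^2 + β*(5*(v 0)^4*(v 1) + (v 2)^5) := by
  simp [P₁, P₂, pderiv_mul, pderiv_pow, pderiv_X, Pi.single_apply]; ring

lemma pd1 (α β : ℂ) (v : Fin 3 → ℂ) :
    eval v (pderiv 1 (C α * P₁ + C β * P₂)) =
      2*α*(v 0)^2*(v 1)*(v 2)^2 + β*((v 0)^5 + 5*(v 1)^4*(v 2)) := by
  simp [P₁, P₂, pderiv_mul, pderiv_pow, pderiv_X, Pi.single_apply]; ring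

lemma pd2 (α β : ℂ) (v : Fin 3 → ℂ) :
    eval v (pderiv 2 (C α * P₁ + C β * P₂)) =
      2*α*(v 0)^2*(v 1)^2*(v 2) + β*(5*(v 2)^4*(v 0) + (v 1)^5) := by
  simp [P₁, P₂, pderiv_mul, pderiv_pow, pderiv_X, Pi.single_apply]; ring

lemma key (α β : ℂ) (h : ¬(α = 0 ∧ β = 0)) :
    IsSingularCurve (C α * P₁ + C β * P₂) ↔ (β = 0 ∨ α ^ 3 = -27 * β ^ 3) := by
  constructor
  · rintro ⟨v, hv, hall⟩
    by_cases hβ : β = 0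
    · exact Or.inl hβ
    right
    have E0 := (pd0 α β v).symm.trans (hall 0)
    have E1 := (pd1 α β v).symm.trans (hall 1)
    have E2 := (pd2 α β v).symm.trans (hall 2)
    set x := v 0 with hx'; set y := v 1 with hy'; set z := v 2 with hz'
    -- all coordinates nonzero
    have hnz : x ≠ 0 ∧ y ≠ 0 ∧ z ≠ 0 := by
      by_contra hc
      have hall0 : x = 0 ∧ y = 0 ∧ z = 0 := by
        push_neg at hc
        rcases (em (x = 0)) with h0 | h0
        · have hy0 : y = 0 := by
            have hh : β * y^5 = 0 := by
              linear_combination E2 - (2*α*x*y^2*z + 5*β*z^4)*h0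
            exact pow_eq_zero_iff (by norm_num) |>.mp ((mul_eq_zero.mp hh).resolve_left hβ)
          have hz0 : z = 0 := by
            have hh : β * z^5 = 0 := by
              linear_combination E0 - (2*α*y^2*z^2 + 5*β*x^3*y)*h0
            exact pow_eq_zero_iff (by norm_num) |>.mp ((mul_eq_zero.mp hh).resolve_left hβ)
          exact ⟨h0, hy0, hz0⟩
        · rcases (em (y = 0)) with h1 | h1
          · have hx0 : x = 0 := by
              have hh : β * x^5 = 0 := by
                linear_combination E1 - (2*α*x^2*z^2 + 5*β*y^3*z)*h1
              exact pow_eq_zero_iff (by norm_num) |>.mp ((mul_eq_zero.mp hh).resolve_left hβ)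
            exact absurd hx0 h0
          · have h2 := hc h0 h1
            have hx0 : x = 0 := by
              have hh : β * x^5 = 0 := by
                linear_combination E1 - (2*α*x^2*y*z + 5*β*y^4)*h2
              exact pow_eq_zero_iff (by norm_num) |>.mp ((mul_eq_zero.mp hh).resolve_left hβ)
            exact absurd hx0 h0
      exact hv (funext fun i => by fin_cases i <;> simp [hall0.1, hall0.2.1, hall0.2.2, ← hx', ← hy', ← hz'])
    obtain ⟨hx, hy, hz⟩ := hnz
    set A := x^5*y with hA'
    set B := y^5*z with hB'
    set Cc := z^5*x with hC'
    have f1 : 4*A + Cc - 5*B = 0 := by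
      have : β * (4*A + Cc - 5*B) = β * 0 := by
        rw [mul_zero]; linear_combination x*E0 - y*E1
      exact mul_left_cancel₀ hβ this
    have f2 : A + 4*B - 5*Cc = 0 := by
      have : β * (A + 4*B - 5*Cc) = β * 0 := by
        rw [mul_zero]; linear_combination y*E1 - z*E2
      exact mul_left_cancel₀ hβ this
    have hAB : A = B := by linear_combination (5*f1 + f2)/21
    have hCB : Cc = B := by linear_combination f1 - 4*hAB
    have h5 : α*(x*y*z)^2 = -3*β*B := by
      linear_combination (x*E0 - 5*β*hAB - β*hCB)/2
    have h6 : α^3*(x*y*z)^6 = -27*β^3*B^3 := by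
      linear_combination (α^2*(x*y*z)^4 - 3*α*β*B*(x*y*z)^2 + 9*β^2*B^2) * h5
    have h7 : B^3 = (x*y*z)^6 := by
      linear_combination -B*Cc*hAB - B^2*hCB
    have hp : (x*y*z)^6 ≠ 0 := pow_ne_zero _ (by simp [hx, hy, hz])
    apply mul_right_cancel₀ hp
    rw [h6, h7]
  · rintro (hβ | hcube)
    · refine ⟨![1, 0, 0], fun hcon => by simpa using congrFun hcon 0, fun i => ?_⟩
      fin_cases i
      · exact (pd0 α β _).trans (by simp)
      · exact (pd1 α β _).trans (by simp [hβ])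
      · exact (pd2 α β _).trans (by simp)
    · by_cases hβ : β = 0
      · refine ⟨![1, 0, 0], fun hcon => by simpa using congrFun hcon 0, fun i => ?_⟩
        fin_cases i
        · exact (pd0 α β _).trans (by simp)
        · exact (pd1 α β _).trans (by simp [hβ])
        · exact (pd2 α β _).trans (by simp)
      · set ω := -α/(3*β) with hωdef
        have hα : α = -3*β*ω := by rw [hωdef]; field_simp
        have hω3 : ω^3 = 1 := by
          rw [hωdef]; field_simp; linear_combination -hcube
        refine ⟨![1, ω, ω^2], fun hcon => by simpa using congrFun hcon 0, fun i => ?_⟩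
        fin_cases i
        · refine (pd0 α β _).trans ?_
          simp only [Matrix.cons_val_zero, Matrix.cons_val_one, Matrix.head_cons,
            Matrix.cons_val_two, Matrix.tail_cons]
          linear_combination 2*ω^6*hα + β*ω*(ω^6-5*ω^3-5)*hω3
        · refine (pd1 α β _).trans ?_
          simp only [Matrix.cons_val_zero, Matrix.cons_val_one, Matrix.head_cons,
            Matrix.cons_val_two, Matrix.tail_cons]
          linear_combination 2*ω^5*hα - β*(ω^3+1)*hω3
        · refine (pd2 α β _).trans ?_
          simp only [Matrix.cons_val_zero, Matrix.cons_val_one, Matrix.head_cons,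
            Matrix.cons_val_two, Matrix.tail_cons]
          linear_combination 2*ω^4*hα + 5*β*ω^5*hω3

lemma part2 (α β : ℂ) (h : ¬(α = 0 ∧ β = 0)) (ζ : ℂ) (hζ : IsPrimitiveRoot ζ 3) :
    (β = 0 ∨ α ^ 3 = -27 * β ^ 3) ↔
      ((∃ c : ℂ, c ≠ 0 ∧ C α * P₁ + C β * P₂ = C c * P₁) ∨
        (∃ c : ℂ, c ≠ 0 ∧ ∃ k : Fin 3,
          C α * P₁ + C β * P₂ = C c * (3 * P₁ - C (ζ ^ (k : ℕ)) * P₂))) := by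
  constructor
  · intro hcase
    by_cases hβ : β = 0
    · have hα0 : α ≠ 0 := fun hα => h ⟨hα, hβ⟩
      exact Or.inl ⟨α, hα0, by rw [hβ, map_zero, zero_mul, add_zero]⟩
    · have hcube : α ^ 3 = -27 * β ^ 3 := hcase.resolve_left hβ
      have hα0 : α ≠ 0 := by
        intro hα
        rw [hα] at hcube
        have : β ^ 3 = 0 := by linear_combination hcube / 27
        exact hβ (pow_eq_zero_iff (by norm_num) |>.mp this)
      have hw3 : (-3 * β / α) ^ 3 = 1 := by
        field_simp
        linear_combination -hcube
      obtain ⟨i, hi, hpow⟩ := hζ.eq_pow_of_pow_eq_one hw3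
      refine Or.inr ⟨α / 3, div_ne_zero hα0 (by norm_num), ⟨i, hi⟩, ?_⟩
      have hki : ((⟨i, hi⟩ : Fin 3) : ℕ) = i := rfl
      rw [hki, hpow]
      have a1 : (C α : MvPolynomial (Fin 3) ℂ) = 3 * C (α / 3) := by
        rw [show ((3 : MvPolynomial (Fin 3) ℂ)) = C (3 : ℂ) from (map_ofNat C 3).symm, ← C_mul]
        congr 1
        field_simp
      have a2 : (C β : MvPolynomial (Fin 3) ℂ) = -(C (α / 3) * C (-3 * β / α)) := by
        rw [← C_mul, ← C_neg]
        congr 1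
        field_simp
      linear_combination P₁ * a1 + P₂ * a2
  · rintro (⟨c, hc, hEq⟩ | ⟨c, hc, k, hEq⟩)
    · left
      have e1 := congrArg (eval ![(1:ℂ), 1, 0]) hEq
      simp [P₁, P₂] at e1
      exact e1
    · right
      set w := ζ ^ (k : ℕ) with hwdef
      have hw3 : w ^ 3 = 1 := by
        rw [hwdef, ← pow_mul, mul_comm, pow_mul, hζ.pow_eq_one, one_pow]
      have e1 := congrArg (eval ![(1:ℂ), 1, 0]) hEq
      have e2 := congrArg (eval ![(1:ℂ), 1, 1]) hEq
      simp [P₁, P₂] at e1 e2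
      have hA : α = 3 * c := by linear_combination e2 - 3 * e1
      linear_combination (α^2 + 3*c*α + 9*c^2) * hA
        + 27 * (β^2 - c*w*β + c^2*w^2) * e1 - 27 * c^3 * hw3

/-- For `(α,β) ≠ (0,0)` and `F = α·P₁ + β·P₂`, the curve `{F = 0}` is singular iff
`β = 0` or `α³ = −27·β³`.  In particular, up to nonzero scalar multiples the pencil spanned
by `P₁` and `P₂` contains exactly four singular members: `P₁` and the three polynomials
`3P₁ − ζᵏP₂`, `k = 0, 1, 2`, for a primitive cube root of unity ζ. -/
theorem pencil_singular_members (α β : ℂ) (h : ¬(α = 0 ∧ β = 0)) :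
    (IsSingularCurve (C α * P₁ + C β * P₂) ↔ (β = 0 ∨ α ^ 3 = -27 * β ^ 3)) ∧
    (∀ ζ : ℂ, IsPrimitiveRoot ζ 3 →
      (IsSingularCurve (C α * P₁ + C β * P₂) ↔
        ((∃ c : ℂ, c ≠ 0 ∧ C α * P₁ + C β * P₂ = C c * P₁) ∨
          (∃ c : ℂ, c ≠ 0 ∧ ∃ k : Fin 3,
            C α * P₁ + C β * P₂ = C c * (3 * P₁ - C (ζ ^ (k : ℕ)) * P₂))))) :=
  ⟨key α β h, fun ζ hζ => (key α β h).trans (part2 α β h ζ hζ)⟩
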